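/- Characterization of envy-freeable allocations: for additive valuations, an allocation A = (A_1, …, A_n) is envy-freeable (i.e., there exist nonnegative payments p_1, …, p_n such that v_i(A_i) + p_i ≥ v_i(A_j) + p_j for all agents i, j) if and only if A maximizes the utilitarian welfare across all reassignments of its bundles to agents, i.e., Σ_i v_i(A_i) ≥ Σ_i v_i(A_{σ(i)}) for every permutation σ of the agents. -/

import Mathlib

open Finset

namespace EFW

variable {n : ℕ}

/-- Total weight of a walk (list of vertices) under edge weights `w`. -/
noncomputable def chainW (w : Fin n → Fin n → ℝ) : List (Fin n) → ℝ
  | [] => 0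
  | [_] => 0
  | a :: b :: l => w a b + chainW w (b :: l)

theorem chainW_cons_cons (w : Fin n → Fin n → ℝ) (a b : Fin n) (l : List (Fin n)) :
    chainW w (a :: b :: l) = w a b + chainW w (b :: l) := rfl

theorem chainW_append (w : Fin n → Fin n → ℝ) (a : Fin n) :
    ∀ (l1 l2 : List (Fin n)),
      chainW w (l1 ++ a :: l2) = chainW w (l1 ++ [a]) + chainW w (a :: l2)
  | [], l2 => by simp [chainW]
  | [x], l2 => by simp [chainW, chainW_cons_cons]
  | x :: y :: l1, l2 => by
    have h := chainW_append w a (y :: l1) l2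
    simp only [List.cons_append, chainW_cons_cons] at *
    rw [h]; ring

theorem chainW_concat (w : Fin n → Fin n → ℝ) (a : Fin n) :
    ∀ (l : List (Fin n)) (h : l ≠ []),
      chainW w (l ++ [a]) = chainW w l + w (l.getLast h) a
  | [x], _ => by simp [chainW, chainW_cons_cons]
  | x :: y :: l, hne => by
    have h := chainW_concat w a (y :: l) (by simp)
    have hgl : (x :: y :: l).getLast hne = (y :: l).getLast (by simp) :=
      List.getLast_cons _
    simp only [List.cons_append] at h
    simp only [List.cons_append, chainW_cons_cons]
    rw [h, hgl]; ring

theorem exists_dup_decomp {α : Type*} : ∀ (l : List α), ¬ l.Nodup →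
    ∃ (b : α) (q1 q2 q3 : List α), l = q1 ++ b :: (q2 ++ b :: q3)
  | [], h => absurd List.nodup_nil h
  | a :: t, h => by
    by_cases ha : a ∈ t
    · obtain ⟨s, u, rfl⟩ := List.append_of_mem ha
      exact ⟨a, [], s, u, rfl⟩
    · have ht : ¬ t.Nodup := fun hn => h (List.nodup_cons.mpr ⟨ha, hn⟩)
      obtain ⟨b, q1, q2, q3, rfl⟩ := exists_dup_decomp t ht
      exact ⟨b, a :: q1, q2, q3, rfl⟩

theorem chainW_remove (w : Fin n → Fin n → ℝ) (b : Fin n) (q1 q2 q3 : List (Fin n)) :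
    chainW w (q1 ++ b :: (q2 ++ b :: q3))
      = chainW w (q1 ++ b :: q3) + chainW w ((b :: q2) ++ [b]) := by
  rw [chainW_append w b q1 (q2 ++ b :: q3), chainW_append w b q1 q3]
  have h2 : chainW w (b :: (q2 ++ b :: q3))
      = chainW w ((b :: q2) ++ [b]) + chainW w (b :: q3) := by
    have h := chainW_append w b (b :: q2) q3
    simpa using h
  rw [h2]; ring

/-- Any closed walk has nonpositive weight, given that all simple cycles do. -/
theorem closedWalk_nonpos (w : Fin n → Fin n → ℝ)
    (Hcyc : ∀ (l : List (Fin n)) (h : l ≠ []), l.Nodup →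
      chainW w l + w (l.getLast h) (l.head h) ≤ 0) :
    ∀ (k : ℕ) (l : List (Fin n)) (a : Fin n), l.length ≤ k →
      l.head? = some a → l.getLast? = some a → chainW w l ≤ 0 := by
  intro k
  induction k with
  | zero =>
    intro l a hl hh _
    cases l <;> simp_all
  | succ k ih =>
    intro l a hl hh hlast
    cases l with
    | nil => simp at hh
    | cons x m =>
      have hx : x = a := by simpa using hh
      subst hx
      -- now the head is named `x`
      cases m with
      | nil => simp [chainW]
      | cons y m' =>
        have hmne : (y :: m') ≠ [] := by simp
        have hlast' : (y :: m').getLast hmne = x := by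
          have h1 : (x :: y :: m').getLast (by simp) = x := by
            have h2 := List.getLast?_eq_getLast (l := x :: y :: m') (by simp)
            rw [h2] at hlast
            exact Option.some_injective _ hlast
          rwa [List.getLast_cons hmne] at h1
        have hsplit : (y :: m') = (y :: m').dropLast ++ [x] := by
          conv_lhs => rw [← List.dropLast_append_getLast hmne]
          rw [hlast']
        set m0 : List (Fin n) := (y :: m').dropLast with hm0
        have hleq : (x :: y :: m') = (x :: m0) ++ [x] := by
          rw [List.cons_append]
          exact congrArg (x :: ·) hsplit
        rw [hleq]
        by_cases hnd : (x :: m0).Nodup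
        · have h3 := Hcyc (x :: m0) (by simp) hnd
          rw [chainW_concat w x (x :: m0) (by simp)]
          simpa using h3
        · obtain ⟨b, q1, q2, q3, hdec⟩ := exists_dup_decomp (x :: m0) hnd
          have hdec2 : (x :: m0) ++ [x] = q1 ++ b :: (q2 ++ b :: (q3 ++ [x])) := by
            rw [hdec]; simp
          rw [hdec2, chainW_remove]
          have hlen : (x :: y :: m').length ≤ k + 1 := hl
          have hlenl : (x :: y :: m').length = q1.length + q2.length + q3.length + 3 := by
            rw [hleq, hdec]
            simp [List.length_append]
            omega
          have h2 : chainW w ((b :: q2) ++ [b]) ≤ 0 := by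
            refine ih ((b :: q2) ++ [b]) b ?_ (by simp) (List.getLast?_concat)
            simp only [List.length_append, List.length_cons, List.length_singleton, List.length_nil]
            omega
          have h1 : chainW w (q1 ++ b :: (q3 ++ [x])) ≤ 0 := by
            refine ih (q1 ++ b :: (q3 ++ [x])) x ?_ ?_ ?_
            · simp only [List.length_append, List.length_cons, List.length_singleton, List.length_nil]
              omega
            · cases q1 with
              | nil =>
                have hxb : x = b := by
                  have h4 := hdec
                  simp only [List.nil_append, List.cons.injEq] at h4
                  exact h4.1
                simp [hxb]
              | cons c q1' =>
                have hc : c = x := by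
                  have h4 := hdec
                  simp only [List.cons_append, List.cons.injEq] at h4
                  exact h4.1.symm
                simp [hc]
            · have h5 : q1 ++ b :: (q3 ++ [x]) = (q1 ++ b :: q3) ++ [x] := by simp
              rw [h5]
              exact List.getLast?_concat
          linarith

/-- Payment to agent `i`: maximum weight of a simple walk starting at `i`. -/
noncomputable def pay (w : Fin n → Fin n → ℝ) (i : Fin n) : ℝ :=
  (((Finset.univ : Finset {l : List (Fin n) // l.Nodup}).filter
      (fun l => l.1.head? = some i)).image (fun l => chainW w l.1)).max'
    ⟨chainW w [i], Finset.mem_image_of_mem _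
      (a := (⟨[i], List.nodup_singleton i⟩ : {l : List (Fin n) // l.Nodup})) (by simp)⟩

theorem le_pay (w : Fin n → Fin n → ℝ) {l : List (Fin n)} {i : Fin n}
    (hnd : l.Nodup) (hh : l.head? = some i) : chainW w l ≤ pay w i := by
  have hm : (⟨l, hnd⟩ : {l : List (Fin n) // l.Nodup}) ∈
      (Finset.univ.filter (fun l : {l : List (Fin n) // l.Nodup} => l.1.head? = some i)) := by
    simp [hh]
  apply Finset.le_max'
  exact Finset.mem_image_of_mem _ hm

theorem pay_nonneg (w : Fin n → Fin n → ℝ) (i : Fin n) : 0 ≤ pay w i := by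
  have h := le_pay w (List.nodup_singleton i) (by simp : [i].head? = some i)
  simpa [chainW] using h

theorem exists_pay (w : Fin n → Fin n → ℝ) (i : Fin n) :
    ∃ l : List (Fin n), l.Nodup ∧ l.head? = some i ∧ chainW w l = pay w i := by
  have h := Finset.max'_mem
    (((Finset.univ : Finset {l : List (Fin n) // l.Nodup}).filter
      (fun l => l.1.head? = some i)).image (fun l => chainW w l.1))
    ⟨chainW w [i], Finset.mem_image_of_mem _
      (a := (⟨[i], List.nodup_singleton i⟩ : {l : List (Fin n) // l.Nodup})) (by simp)⟩
  rw [Finset.mem_image] at h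
  obtain ⟨⟨l, hnd⟩, hmem, hval⟩ := h
  rw [Finset.mem_filter] at hmem
  exact ⟨l, hnd, hmem.2, hval⟩

/-- Any walk (possibly with repeats) starting at `i` has weight at most `pay w i`. -/
theorem walk_le_pay (w : Fin n → Fin n → ℝ)
    (Hcyc : ∀ (l : List (Fin n)) (h : l ≠ []), l.Nodup →
      chainW w l + w (l.getLast h) (l.head h) ≤ 0) :
    ∀ (k : ℕ) (l : List (Fin n)) (i : Fin n), l.length ≤ k →
      l.head? = some i → chainW w l ≤ pay w i := by
  intro k
  induction k with
  | zero =>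
    intro l i hl hh
    cases l <;> simp_all
  | succ k ih =>
    intro l i hl hh
    by_cases hnd : l.Nodup
    · exact le_pay w hnd hh
    · obtain ⟨b, q1, q2, q3, rfl⟩ := exists_dup_decomp l hnd
      rw [chainW_remove]
      have h2 : chainW w ((b :: q2) ++ [b]) ≤ 0 := by
        refine closedWalk_nonpos w Hcyc (q2.length + 2) ((b :: q2) ++ [b]) b ?_
          (by simp) (List.getLast?_concat)
        simp
      have h1 : chainW w (q1 ++ b :: q3) ≤ pay w i := by
        refine ih (q1 ++ b :: q3) i ?_ ?_
        · simp only [List.length_append, List.length_cons] at hl ⊢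
          omega
        · cases q1 with
          | nil =>
            simp only [List.nil_append, List.head?_cons] at hh ⊢
            simpa using hh
          | cons c q1' => simpa using hh
      linarith

/-- Sum of outgoing edge weights along the cyclic permutation of a nodup list. -/
theorem sum_formPerm (w : Fin n → Fin n → ℝ) :
    ∀ (a : Fin n) (t : List (Fin n)), (a :: t).Nodup →
      ∑ x ∈ (a :: t).toFinset, w x ((a :: t).formPerm x)
        = chainW w (a :: t) + w ((a :: t).getLast (by simp)) a
  | a, [], hnd => by
    simp [List.formPerm_singleton, chainW]
  | a, b :: t', hnd => by
    have hnd' : (b :: t').Nodup := hnd.of_cons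
    have hanotin : a ∉ (b :: t') := (List.nodup_cons.mp hnd).1
    set τ := (b :: t').formPerm with hτ
    set σ := (a :: b :: t').formPerm with hσ
    have hσeq : ∀ x, σ x = Equiv.swap a b (τ x) := by
      intro x
      rw [hσ, List.formPerm_cons_cons]
      rfl
    have hσa : σ a = b := by
      rw [hσeq, hτ, List.formPerm_apply_of_notMem hanotin, Equiv.swap_apply_left]
    set L := (b :: t').getLast (by simp) with hL
    have hLmem : L ∈ (b :: t').toFinset := by
      simp only [List.mem_toFinset]
      exact List.getLast_mem _
    have hτL : τ L = b := List.formPerm_apply_getLast b t'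
    have hσL : σ L = a := by
      rw [hσeq, hτL, Equiv.swap_apply_right]
    have hσeqτ : ∀ x ∈ (b :: t').toFinset.erase L, w x (σ x) = w x (τ x) := by
      intro x hx
      rw [Finset.mem_erase, List.mem_toFinset] at hx
      have h1 : τ x ∈ (b :: t') := List.formPerm_apply_mem_of_mem hx.2
      have hne2 : τ x ≠ a := fun h => hanotin (h ▸ h1)
      have hne3 : τ x ≠ b := by
        intro h
        exact hx.1 (τ.injective (h.trans hτL.symm))
      rw [hσeq, Equiv.swap_apply_of_ne_of_ne hne2 hne3]
    have htoF : (a :: b :: t').toFinset = insert a (b :: t').toFinset := by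
      simp [List.toFinset_cons]
    have hains : a ∉ (b :: t').toFinset := by simpa using hanotin
    rw [htoF, Finset.sum_insert hains, hσa]
    have hsplit : ∀ f : Fin n → ℝ,
        ∑ x ∈ (b :: t').toFinset, f x = f L + ∑ x ∈ (b :: t').toFinset.erase L, f x :=
      fun f => (Finset.add_sum_erase _ f hLmem).symm
    rw [hsplit (fun x => w x (σ x))]
    have hih := sum_formPerm w b t' hnd'
    rw [hsplit (fun x => w x (τ x))] at hih
    have herase : ∑ x ∈ (b :: t').toFinset.erase L, w x (σ x)
        = ∑ x ∈ (b :: t').toFinset.erase L, w x (τ x) :=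
      Finset.sum_congr rfl (fun x hx => hσeqτ x hx)
    have hgl : (a :: b :: t').getLast (by simp) = L :=
      List.getLast_cons (by simp : (b :: t') ≠ [])
    rw [herase, hσL]
    rw [hτL] at hih
    have hmid : ∑ x ∈ (b :: t').toFinset.erase L, w x (τ x) = chainW w (b :: t') := by
      rw [← hL] at hih
      linarith [hih]
    rw [hmid, hgl, chainW_cons_cons]
    ring

end EFW

open EFW in
/-- Characterization of envy-freeable allocations: for additive valuations,
an allocation `A` is envy-freeable (there exist nonnegative payments making it envy-free)
if and only if `A` maximizes the utilitarian welfare across all reassignments of its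
bundles to agents. -/
theorem envy_freeable_iff_welfare_maximizing {n : ℕ} {G : Type*} [DecidableEq G]
    (M : Finset G) (v : Fin n → G → ℝ) (hv : ∀ i g, 0 ≤ v i g)
    (A : Fin n → Finset G)
    (hA : (∀ i j, i ≠ j → Disjoint (A i) (A j)) ∧ Finset.univ.biUnion A = M) :
    (∃ p : Fin n → ℝ, (∀ i, 0 ≤ p i) ∧
      ∀ i j : Fin n, (∑ g ∈ A j, v i g) + p j ≤ (∑ g ∈ A i, v i g) + p i) ↔
    (∀ σ : Equiv.Perm (Fin n), ∑ i, ∑ g ∈ A (σ i), v i g ≤ ∑ i, ∑ g ∈ A i, v i g) := by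
  constructor
  · rintro ⟨p, hp0, hp⟩ σ
    have hsum : ∑ i, ((∑ g ∈ A (σ i), v i g) + p (σ i))
        ≤ ∑ i, ((∑ g ∈ A i, v i g) + p i) :=
      Finset.sum_le_sum (fun i _ => hp i (σ i))
    have hpcomp : ∑ i, p (σ i) = ∑ i, p i := Equiv.sum_comp σ p
    rw [Finset.sum_add_distrib, Finset.sum_add_distrib, hpcomp] at hsum
    linarith
  · intro hperm
    set w : Fin n → Fin n → ℝ :=
      fun i j => (∑ g ∈ A j, v i g) - (∑ g ∈ A i, v i g) with hw
    have Hcyc : ∀ (l : List (Fin n)) (h : l ≠ []), l.Nodup →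
        chainW w l + w (l.getLast h) (l.head h) ≤ 0 := by
      intro l hne hnd
      have hσ := hperm l.formPerm
      have hsum : ∑ i, w i (l.formPerm i) ≤ 0 := by
        have heq : ∑ i, w i (l.formPerm i)
            = (∑ i, ∑ g ∈ A (l.formPerm i), v i g) - ∑ i, ∑ g ∈ A i, v i g := by
          rw [← Finset.sum_sub_distrib]
        rw [heq]
        linarith
      have hrestrict : ∑ i, w i (l.formPerm i) = ∑ x ∈ l.toFinset, w x (l.formPerm x) := by
        symm
        apply Finset.sum_subset (Finset.subset_univ _)
        intro x _ hx
        rw [List.mem_toFinset] at hx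
        rw [List.formPerm_apply_of_notMem hx]
        simp [hw]
      cases l with
      | nil => exact absurd rfl hne
      | cons a t =>
        have hkey := sum_formPerm w a t hnd
        rw [hrestrict, hkey] at hsum
        simpa using hsum
    refine ⟨pay w, pay_nonneg w, fun i j => ?_⟩
    have hkey : w i j + pay w j ≤ pay w i := by
      obtain ⟨l, hnd, hh, hval⟩ := exists_pay w j
      cases l with
      | nil => simp at hh
      | cons x rest =>
        have hx : j = x := by
          have := hh
          simp only [List.head?_cons, Option.some.injEq] at this
          exact this.symm
        subst hx
        have hwalk : chainW w (i :: j :: rest) ≤ pay w i :=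
          walk_le_pay w Hcyc (i :: j :: rest).length _ i le_rfl (by simp)
        rw [chainW_cons_cons, hval] at hwalk
        exact hwalk
    have hkey' : ((∑ g ∈ A j, v i g) - (∑ g ∈ A i, v i g)) + pay w j ≤ pay w i := hkey
    linarith
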